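/- arXiv:1505.06344 — 6 statements merged into one kernel-verified Lean document; each statement's English description precedes it below -/
import Mathlib

section
/- For a positive definite symmetric matrix R ∈ ℝ^{n×n}, integers a ≤ b with ℓ = b - a + 1, and any sequence u : ℤ[a,b] → ℝ^n, the double-summation Jensen inequality holds: ∑_{k=a}^{b} ∑_{s=a}^{k} u_s^T R u_s ≥ (2/(ℓ(ℓ+1))) (∑_{k=a}^{b} ∑_{s=a}^{k} u_s)^T R (∑_{k=a}^{b} ∑_{s=a}^{k} u_s). -/
open Finset Matrix

lemma key_jensen {ι : Type*} (n : ℕ) (R : Matrix (Fin n) (Fin n) ℝ) (hR : R.PosSemidef)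
    (t : Finset ι) (v : ι → Fin n → ℝ) :
    (∑ i ∈ t, v i) ⬝ᵥ R.mulVec (∑ i ∈ t, v i) ≤
      (t.card : ℝ) * ∑ i ∈ t, (v i) ⬝ᵥ R.mulVec (v i) := by
  obtain ⟨B, rfl⟩ : ∃ B : Matrix (Fin n) (Fin n) ℝ, R = Bᴴ * B := by
    open scoped MatrixOrder in exact CStarAlgebra.nonneg_iff_eq_star_mul_self.mp hR.nonneg
  have hq : ∀ x : Fin n → ℝ, x ⬝ᵥ (Bᴴ * B).mulVec x = ∑ j, (B.mulVec x j) ^ 2 := by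
    intro x
    have : Bᴴ = Bᵀ := by ext i j; simp [Matrix.conjTranspose_apply]
    rw [this, ← Matrix.mulVec_mulVec, dotProduct_mulVec, Matrix.vecMul_transpose]
    simp [dotProduct, sq]
  simp_rw [hq]
  have hsum : B.mulVec (∑ i ∈ t, v i) = ∑ i ∈ t, B.mulVec (v i) := by
    rw [← Matrix.mulVecLin_apply, map_sum]
    simp [Matrix.mulVecLin_apply]
  rw [hsum]
  simp only [Finset.sum_apply]
  calc ∑ j, (∑ i ∈ t, B.mulVec (v i) j) ^ 2
      ≤ ∑ j, (t.card : ℝ) * ∑ i ∈ t, (B.mulVec (v i) j) ^ 2 :=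
        Finset.sum_le_sum fun j _ => sq_sum_le_card_mul_sum_sq
    _ = (t.card : ℝ) * ∑ i ∈ t, ∑ j, (B.mulVec (v i) j) ^ 2 := by
        rw [← Finset.mul_sum]
        congr 1
        exact Finset.sum_comm

theorem discrete_jensen_double
    (n : ℕ) (R : Matrix (Fin n) (Fin n) ℝ) (hR : R.PosDef) (hRsym : R.IsSymm)
    (a b : ℤ) (hab : a ≤ b) (u : ℤ → (Fin n → ℝ)) :
    ∑ k ∈ Finset.Icc a b, ∑ s ∈ Finset.Icc a k, (u s) ⬝ᵥ R.mulVec (u s) ≥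
      (2 / (((b : ℝ) - a + 1) * ((b - a + 1) + 1))) *
        ((∑ k ∈ Finset.Icc a b, ∑ s ∈ Finset.Icc a k, u s) ⬝ᵥ
          R.mulVec (∑ k ∈ Finset.Icc a b, ∑ s ∈ Finset.Icc a k, u s)) := by
  set T : Finset ((_ : ℤ) × ℤ) := (Finset.Icc a b).sigma (fun k => Finset.Icc a k) with hT
  -- rewrite the double sums as sums over T
  have h1 : ∑ k ∈ Finset.Icc a b, ∑ s ∈ Finset.Icc a k, (u s) ⬝ᵥ R.mulVec (u s)
      = ∑ p ∈ T, (u p.2) ⬝ᵥ R.mulVec (u p.2) := by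
    rw [hT, Finset.sum_sigma]
  have h2 : ∑ k ∈ Finset.Icc a b, ∑ s ∈ Finset.Icc a k, u s = ∑ p ∈ T, u p.2 := by
    rw [hT, Finset.sum_sigma]
  rw [h1, h2]
  -- compute the cardinality of T
  set m : ℕ := (b + 1 - a).toNat with hm
  have hTcard : T.card * 2 = m * (m + 1) := by
    rw [hT, Finset.card_sigma]
    rw [Int.Icc_eq_finset_map a b, Finset.sum_map]
    have : ∀ i : ℕ, (Finset.Icc a ((Nat.castEmbedding.trans <| addLeftEmbedding a) i)).card
        = i + 1 := by
      intro i
      simp [Int.card_Icc]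
      omega
    simp_rw [this]
    have h3 : ∑ i ∈ Finset.range m, (i + 1) = ∑ i ∈ Finset.range (m + 1), i := by
      rw [Finset.sum_range_succ' (fun i => i) m]
      simp
    rw [h3, Finset.sum_range_id_mul_two]
    rw [Nat.add_sub_cancel]
    ring
  have hmR : (m : ℝ) = (b : ℝ) - a + 1 := by
    have h0 : (0:ℤ) ≤ b + 1 - a := by omega
    have h1' : ((m : ℤ) : ℝ) = ((b + 1 - a : ℤ) : ℝ) := by
      rw [hm, Int.toNat_of_nonneg h0]
    push_cast at h1'
    linarith
  have hcardR : (T.card : ℝ) * 2 = ((b : ℝ) - a + 1) * ((b - a + 1) + 1) := by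
    have := congrArg (fun x : ℕ => (x : ℝ)) hTcard
    push_cast at this
    rw [hmR] at this
    linarith
  have hL : (0:ℝ) < ((b : ℝ) - a + 1) * ((b - a + 1) + 1) := by
    have : (1:ℝ) ≤ (b:ℝ) - a + 1 := by
      have : (a:ℝ) ≤ b := by exact_mod_cast hab
      linarith
    nlinarith
  have hkey := key_jensen n R hR.posSemidef T (fun p => u p.2)
  rw [ge_iff_le, div_mul_eq_mul_div, div_le_iff₀ hL]
  calc 2 * ((∑ p ∈ T, u p.2) ⬝ᵥ R.mulVec (∑ p ∈ T, u p.2))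
      ≤ 2 * ((T.card : ℝ) * ∑ p ∈ T, (u p.2) ⬝ᵥ R.mulVec (u p.2)) := by linarith
    _ = ((T.card : ℝ) * 2) * ∑ p ∈ T, (u p.2) ⬝ᵥ R.mulVec (u p.2) := by ring
    _ = (∑ p ∈ T, (u p.2) ⬝ᵥ R.mulVec (u p.2)) * (((b : ℝ) - a + 1) * ((b - a + 1) + 1)) := by
        rw [hcardR]; ring
end

section
/- Let R₁ ∈ ℝ^{n×n} and R₂ ∈ ℝ^{m×m} be symmetric positive definite and X ∈ ℝ^{n×m} be such that the block matrix [[R₁, X],[Xᵀ, R₂]] is positive semidefinite. Then for every α ∈ (0,1), the block-diagonal matrix diag((1/α)R₁, (1/(1-α))R₂) minus [[R₁, X],[Xᵀ, R₂]] is positive semidefinite. -/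
open Matrix

lemma quad_form_blocks {n m : ℕ} (A : Matrix (Fin n) (Fin n) ℝ) (B : Matrix (Fin n) (Fin m) ℝ)
    (C : Matrix (Fin m) (Fin n) ℝ) (D : Matrix (Fin m) (Fin m) ℝ) (u : Fin n → ℝ) (v : Fin m → ℝ) :
    star (Sum.elim u v) ⬝ᵥ (fromBlocks A B C D *ᵥ Sum.elim u v) =
      u ⬝ᵥ (A *ᵥ u) + u ⬝ᵥ (B *ᵥ v) + v ⬝ᵥ (C *ᵥ u) + v ⬝ᵥ (D *ᵥ v) := by
  simp [fromBlocks_mulVec, sumElim_dotProduct_sumElim, dotProduct_add]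
  ring

theorem reciprocally_convex_combination
    (n m : ℕ) (R₁ : Matrix (Fin n) (Fin n) ℝ) (R₂ : Matrix (Fin m) (Fin m) ℝ)
    (X : Matrix (Fin n) (Fin m) ℝ)
    (hR₁ : R₁.PosDef) (hR₁s : R₁.IsSymm) (hR₂ : R₂.PosDef) (hR₂s : R₂.IsSymm)
    (hblock : (Matrix.fromBlocks R₁ X Xᵀ R₂).PosSemidef)
    (α : ℝ) (hα0 : 0 < α) (hα1 : α < 1) :
    (Matrix.fromBlocks ((1 / α) • R₁) 0 0 ((1 / (1 - α)) • R₂) -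
      Matrix.fromBlocks R₁ X Xᵀ R₂).PosSemidef := by
  have h1α : (0:ℝ) < 1 - α := by linarith
  have hβ : (0:ℝ) < (1 - α) / α := div_pos h1α hα0
  set c : ℝ := Real.sqrt ((1 - α) / α) with hc
  have hc0 : 0 < c := Real.sqrt_pos.2 hβ
  have hc2 : c * c = (1 - α) / α := Real.mul_self_sqrt hβ.le
  rw [posSemidef_iff_dotProduct_mulVec]
  constructor
  · refine IsHermitian.sub ?_ hblock.1
    refine IsHermitian.fromBlocks ?_ (by simp) ?_
    · simpa [Matrix.IsHermitian, conjTranspose_smul] using congrArg (fun M => (1/α : ℝ) • M) hR₁.isHermitian.eq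
    · simpa [Matrix.IsHermitian, conjTranspose_smul] using congrArg (fun M => (1/(1-α) : ℝ) • M) hR₂.isHermitian.eq
  · intro x
    have hx : x = Sum.elim (x ∘ Sum.inl) (x ∘ Sum.inr) := by ext (i|i) <;> rfl
    set u := x ∘ Sum.inl
    set v := x ∘ Sum.inr
    set a := u ⬝ᵥ (R₁ *ᵥ u) with ha
    set b := v ⬝ᵥ (R₂ *ᵥ v) with hb
    set s := u ⬝ᵥ (X *ᵥ v) with hs
    have ht : v ⬝ᵥ (Xᵀ *ᵥ u) = s := by
      rw [hs, dotProduct_mulVec, vecMul_transpose, dotProduct_comm, dotProduct_mulVec]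
    have hkey := hblock.dotProduct_mulVec_nonneg (Sum.elim (c • u) ((-c⁻¹) • v))
    rw [quad_form_blocks] at hkey
    simp only [mulVec_smul, dotProduct_smul, smul_dotProduct, smul_eq_mul, ht] at hkey
    have hcc : c * c⁻¹ = 1 := mul_inv_cancel₀ hc0.ne'
    rw [hx, sub_mulVec, dotProduct_sub, quad_form_blocks, quad_form_blocks]
    simp only [Matrix.zero_mulVec, dotProduct_zero, smul_mulVec, dotProduct_smul,
      smul_eq_mul, add_zero, zero_add, ht, ← ha, ← hb, ← hs]
    have e1 : 1 / α - 1 = c * c := by rw [hc2]; field_simp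
    have e2 : 1 / (1 - α) - 1 = c⁻¹ * c⁻¹ := by
      rw [← mul_inv, hc2]; field_simp; ring
    rw [← ha, ← hb, ← hs] at hkey
    have hkey' : 0 ≤ c * c * a + c⁻¹ * c⁻¹ * b - 2 * s := by
      have heq : c * (c * a) + -c⁻¹ * (c * s) + c * (-c⁻¹ * s) + -c⁻¹ * (-c⁻¹ * b)
          = c * c * a + c⁻¹ * c⁻¹ * b - 2 * (c * c⁻¹ * s) := by ring
      rw [heq, hcc, one_mul] at hkey
      linarith
    have hgoal : 1 / α * a + 1 / (1 - α) * b - (a + s + s + b)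
        = c * c * a + c⁻¹ * c⁻¹ * b - 2 * s := by
      rw [← e1, ← e2]; ring
    linarith [hkey', hgoal.ge, hgoal.le]
end

section
/- (Single-sum refined Jensen inequality, Lemma 3.1) Let R ∈ ℝ^{n×n} be symmetric positive definite, a < b integers, ℓ = b - a + 1, and u : ℤ[a,b] → ℝ^n. Define υ₁ = ∑_{k=a}^{b} u_k, υ₂ = ∑_{k=a}^{b} ∑_{s=a}^{k} u_s, υ₃ = ∑_{k=a}^{b} ∑_{s=a}^{k} ∑_{i=a}^{s} u_i, ζ₁ = υ₁ - (2/(ℓ+1))υ₂, and ζ₂ = υ₁ - (6/(ℓ+1))υ₂ + (12/((ℓ+1)(ℓ+2)))υ₃. Then ∑_{k=a}^{b} u_k^T R u_k - (1/ℓ) υ₁^T R υ₁ ≥ (3(ℓ+1)/(ℓ(ℓ-1))) ζ₁^T R ζ₁ + (5(ℓ+1)(ℓ+2)²/(ℓ(ℓ-1)(ℓ²+11))) ζ₂^T R ζ₂, provided ℓ > 1. -/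
open Finset Matrix


lemma rj_sum_Icc_eq_range {M : Type*} [AddCommMonoid M] (a b : ℤ) (g : ℤ → M) :
    ∑ k ∈ Finset.Icc a b, g k = ∑ m ∈ Finset.range (b + 1 - a).toNat, g (a + m) := by
  rw [Int.Icc_eq_finset_map, Finset.sum_map]; rfl

lemma rj_sum_quartic (N : ℕ) (c0 c1 c2 c3 c4 : ℝ) :
    ∑ m ∈ Finset.range N,
      (c4 * (m : ℝ) ^ 4 + c3 * (m : ℝ) ^ 3 + c2 * (m : ℝ) ^ 2 + c1 * (m : ℝ) + c0)
    = c4 * ((N : ℝ) * (N - 1) * (2 * N - 1) * (3 * (N : ℝ) ^ 2 - 3 * N - 1) / 30)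
      + c3 * ((N : ℝ) ^ 2 * ((N : ℝ) - 1) ^ 2 / 4)
      + c2 * ((N : ℝ) * (N - 1) * (2 * N - 1) / 6)
      + c1 * ((N : ℝ) * (N - 1) / 2) + c0 * N := by
  induction N with
  | zero => simp
  | succ n ih => rw [Finset.sum_range_succ, ih]; push_cast; ring

lemma rj_swap2 {M : Type*} [AddCommMonoid M] (a c : ℤ) (f : ℤ → M) :
    ∑ k ∈ Finset.Icc a c, ∑ s ∈ Finset.Icc a k, f s
      = ∑ s ∈ Finset.Icc a c, (c + 1 - s).toNat • f s := by
  rw [Finset.sum_comm' (s' := fun s => Finset.Icc s c) (t' := Finset.Icc a c)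
    (by intro k s; simp only [Finset.mem_Icc]; omega)]
  refine Finset.sum_congr rfl fun s _ => ?_
  rw [Finset.sum_const, Int.card_Icc]

lemma rj_sum_dot (n : ℕ) {ι : Type*} (s : Finset ι) (f : ι → Fin n → ℝ) (y : Fin n → ℝ) :
    (∑ k ∈ s, f k) ⬝ᵥ y = ∑ k ∈ s, f k ⬝ᵥ y := by
  simp only [dotProduct, Finset.sum_apply, Finset.sum_mul]
  exact Finset.sum_comm

lemma rj_proj (n : ℕ) (R : Matrix (Fin n) (Fin n) ℝ) (hR : R.PosDef) (hRsym : R.IsSymm)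
    {ι : Type*} [DecidableEq ι] (s : Finset ι) (u : ι → Fin n → ℝ) (p q : ι → ℝ)
    (ℓ S₁ S₂ : ℝ) (hcard : ((s.card : ℕ) : ℝ) = ℓ)
    (hp0 : ∑ k ∈ s, p k = 0) (hq0 : ∑ k ∈ s, q k = 0)
    (hpq : ∑ k ∈ s, p k * q k = 0)
    (hp2 : ∑ k ∈ s, (p k) ^ 2 = S₁) (hq2 : ∑ k ∈ s, (q k) ^ 2 = S₂) :
    ∑ k ∈ s, u k ⬝ᵥ R.mulVec (u k)
      - (1 / ℓ) * ((∑ k ∈ s, u k) ⬝ᵥ R.mulVec (∑ k ∈ s, u k))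
    ≥ (1 / S₁) * ((∑ k ∈ s, p k • u k) ⬝ᵥ R.mulVec (∑ k ∈ s, p k • u k))
      + (1 / S₂) * ((∑ k ∈ s, q k • u k) ⬝ᵥ R.mulVec (∑ k ∈ s, q k • u k)) := by
  have hsym : ∀ x y : Fin n → ℝ, x ⬝ᵥ R.mulVec y = y ⬝ᵥ R.mulVec x := fun x y => by
    rw [Matrix.dotProduct_mulVec, ← Matrix.mulVec_transpose, hRsym.eq, dotProduct_comm]
  have hBnn : ∀ x : Fin n → ℝ, 0 ≤ x ⬝ᵥ R.mulVec x := fun x => by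
    simpa using hR.posSemidef.dotProduct_mulVec_nonneg x
  set υ := ∑ k ∈ s, u k with hυ
  set c₁ := ∑ k ∈ s, p k • u k with hc₁
  set c₂ := ∑ k ∈ s, q k • u k with hc₂
  set v : ι → Fin n → ℝ :=
    fun k => u k - ((1 / ℓ) • υ + (p k / S₁) • c₁ + (q k / S₂) • c₂) with hv
  have hpt : ∀ k, v k ⬝ᵥ R.mulVec (v k) =
      u k ⬝ᵥ R.mulVec (u k)
      - (2 / ℓ) * (u k ⬝ᵥ R.mulVec υ)
      - (2 / S₁) * (p k * (u k ⬝ᵥ R.mulVec c₁))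
      - (2 / S₂) * (q k * (u k ⬝ᵥ R.mulVec c₂))
      + (1 / ℓ ^ 2) * (υ ⬝ᵥ R.mulVec υ)
      + (1 / (ℓ * S₁)) * (p k * ((υ ⬝ᵥ R.mulVec c₁) + (c₁ ⬝ᵥ R.mulVec υ)))
      + (1 / (ℓ * S₂)) * (q k * ((υ ⬝ᵥ R.mulVec c₂) + (c₂ ⬝ᵥ R.mulVec υ)))
      + (1 / S₁ ^ 2) * ((p k) ^ 2 * (c₁ ⬝ᵥ R.mulVec c₁))
      + (1 / (S₁ * S₂)) * ((p k * q k) * ((c₁ ⬝ᵥ R.mulVec c₂) + (c₂ ⬝ᵥ R.mulVec c₁)))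
      + (1 / S₂ ^ 2) * ((q k) ^ 2 * (c₂ ⬝ᵥ R.mulVec c₂)) := by
    intro k
    have e1 : υ ⬝ᵥ R.mulVec (u k) = u k ⬝ᵥ R.mulVec υ := hsym _ _
    have e2 : c₁ ⬝ᵥ R.mulVec (u k) = u k ⬝ᵥ R.mulVec c₁ := hsym _ _
    have e3 : c₂ ⬝ᵥ R.mulVec (u k) = u k ⬝ᵥ R.mulVec c₂ := hsym _ _
    simp only [hv, sub_dotProduct, add_dotProduct, smul_dotProduct,
      Matrix.mulVec_sub, Matrix.mulVec_add, Matrix.mulVec_smul, dotProduct_sub,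
      dotProduct_add, dotProduct_smul, smul_eq_mul, e1, e2, e3]
    ring
  have Hu : ∀ y : Fin n → ℝ, ∑ k ∈ s, u k ⬝ᵥ R.mulVec y = υ ⬝ᵥ R.mulVec y := fun y => by
    rw [hυ, rj_sum_dot]
  have Hp : ∀ y : Fin n → ℝ, ∑ k ∈ s, p k * (u k ⬝ᵥ R.mulVec y) = c₁ ⬝ᵥ R.mulVec y := fun y => by
    rw [hc₁, rj_sum_dot]
    exact Finset.sum_congr rfl fun k _ => by rw [smul_dotProduct, smul_eq_mul]
  have Hq : ∀ y : Fin n → ℝ, ∑ k ∈ s, q k * (u k ⬝ᵥ R.mulVec y) = c₂ ⬝ᵥ R.mulVec y := fun y => by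
    rw [hc₂, rj_sum_dot]
    exact Finset.sum_congr rfl fun k _ => by rw [smul_dotProduct, smul_eq_mul]
  have key : ∑ k ∈ s, v k ⬝ᵥ R.mulVec (v k)
      = (∑ k ∈ s, u k ⬝ᵥ R.mulVec (u k)) - (1 / ℓ) * (υ ⬝ᵥ R.mulVec υ)
        - (1 / S₁) * (c₁ ⬝ᵥ R.mulVec c₁) - (1 / S₂) * (c₂ ⬝ᵥ R.mulVec c₂) := by
    rw [Finset.sum_congr rfl fun k _ => hpt k]
    simp only [Finset.sum_add_distrib, Finset.sum_sub_distrib, ← Finset.mul_sum,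
      ← Finset.sum_mul, Hu, Hp, Hq, hp0, hq0, hpq, hp2, hq2, Finset.sum_const,
      nsmul_eq_mul, hcard, zero_mul, mul_zero, add_zero, sub_zero]
    have a1 : ℓ * ((1 / ℓ ^ 2) * (υ ⬝ᵥ R.mulVec υ)) = (1 / ℓ) * (υ ⬝ᵥ R.mulVec υ) := by
      rcases eq_or_ne ℓ 0 with h | h
      · simp [h]
      · field_simp
    have a2 : (1 / S₁ ^ 2) * (S₁ * (c₁ ⬝ᵥ R.mulVec c₁)) = (1 / S₁) * (c₁ ⬝ᵥ R.mulVec c₁) := by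
      rcases eq_or_ne S₁ 0 with h | h
      · simp [h]
      · field_simp
    have a3 : (1 / S₂ ^ 2) * (S₂ * (c₂ ⬝ᵥ R.mulVec c₂)) = (1 / S₂) * (c₂ ⬝ᵥ R.mulVec c₂) := by
      rcases eq_or_ne S₂ 0 with h | h
      · simp [h]
      · field_simp
    linear_combination a1 + a2 + a3
  have hnn : 0 ≤ ∑ k ∈ s, v k ⬝ᵥ R.mulVec (v k) :=
    Finset.sum_nonneg fun k _ => hBnn _
  rw [key] at hnn
  linarith

set_option maxHeartbeats 2000000 in
theorem refined_jensen_single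
    (n : ℕ) (R : Matrix (Fin n) (Fin n) ℝ) (hR : R.PosDef) (hRsym : R.IsSymm)
    (a b : ℤ) (hab : a < b) (u : ℤ → (Fin n → ℝ)) :
    ∀ (ℓ : ℝ), ℓ = (b : ℝ) - a + 1 →
    ∀ (υ₁ υ₂ υ₃ ζ₁ ζ₂ : Fin n → ℝ),
      υ₁ = ∑ k ∈ Finset.Icc a b, u k →
      υ₂ = ∑ k ∈ Finset.Icc a b, ∑ s ∈ Finset.Icc a k, u s →
      υ₃ = ∑ k ∈ Finset.Icc a b, ∑ s ∈ Finset.Icc a k, ∑ i ∈ Finset.Icc a s, u i →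
      ζ₁ = υ₁ - (2 / (ℓ + 1)) • υ₂ →
      ζ₂ = υ₁ - (6 / (ℓ + 1)) • υ₂ + (12 / ((ℓ + 1) * (ℓ + 2))) • υ₃ →
      ∑ k ∈ Finset.Icc a b, (u k) ⬝ᵥ R.mulVec (u k) - (1 / ℓ) * (υ₁ ⬝ᵥ R.mulVec υ₁) ≥
        (3 * (ℓ + 1) / (ℓ * (ℓ - 1))) * (ζ₁ ⬝ᵥ R.mulVec ζ₁) +
          (5 * (ℓ + 1) * (ℓ + 2) ^ 2 / (ℓ * (ℓ - 1) * (ℓ ^ 2 + 11))) * (ζ₂ ⬝ᵥ R.mulVec ζ₂) := by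
  intro ℓ hℓ υ₁ υ₂ υ₃ ζ₁ ζ₂ h1 h2 h3 h4 h5
  have hab' : a + 1 ≤ b := hab
  have hbR : (a : ℝ) + 1 ≤ (b : ℝ) := by exact_mod_cast hab'
  have hl2 : 2 ≤ ℓ := by rw [hℓ]; linarith
  have hℓ0 : ℓ ≠ 0 := by linarith
  have hℓm1 : ℓ - 1 ≠ 0 := by linarith
  have hℓp1 : ℓ + 1 ≠ 0 := by linarith
  have hℓp2 : ℓ + 2 ≠ 0 := by linarith
  have hN : (((b + 1 - a).toNat : ℕ) : ℝ) = ℓ := by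
    have h0 : (0 : ℤ) ≤ b + 1 - a := by omega
    rw [← Int.cast_natCast, Int.toNat_of_nonneg h0]
    push_cast
    rw [hℓ]; ring
  have hcard : (((Finset.Icc a b).card : ℕ) : ℝ) = ℓ := by
    rw [Int.card_Icc]; exact hN
  set S₁ : ℝ := ℓ * (ℓ - 1) * (ℓ + 1) / 3 with hS₁def
  set S₂ : ℝ := ℓ * (ℓ - 1) * (ℓ + 1) * (ℓ ^ 2 - 4) / 5 with hS₂def
  set P : ℤ → ℝ := fun k => 2 * (k : ℝ) - a - b with hPdef
  set Q : ℤ → ℝ := fun k =>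
    6 * ((b : ℝ) + 1 - k) ^ 2 - 6 * ((b : ℝ) + 1 - k) * (ℓ + 1) + (ℓ + 1) * (ℓ + 2) with hQdef
  -- orthogonality relations
  have hp0 : ∑ k ∈ Finset.Icc a b, P k = 0 := by
    rw [rj_sum_Icc_eq_range,
      Finset.sum_congr rfl (fun (m : ℕ) _ => (show P (a + (m : ℤ)) =
        0 * (m : ℝ) ^ 4 + 0 * (m : ℝ) ^ 3 + 0 * (m : ℝ) ^ 2 + 2 * (m : ℝ) + (-(ℓ - 1)) from by
          simp only [hPdef]; push_cast; rw [hℓ]; ring)),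
      rj_sum_quartic]
    simp only [hN]; ring
  have hq0 : ∑ k ∈ Finset.Icc a b, Q k = 0 := by
    rw [rj_sum_Icc_eq_range,
      Finset.sum_congr rfl (fun (m : ℕ) _ => (show Q (a + (m : ℤ)) =
        0 * (m : ℝ) ^ 4 + 0 * (m : ℝ) ^ 3 + 6 * (m : ℝ) ^ 2 + (-(6 * (ℓ - 1))) * (m : ℝ)
          + (ℓ - 1) * (ℓ - 2) from by
          simp only [hQdef]; push_cast; rw [hℓ]; ring)),
      rj_sum_quartic]
    simp only [hN]; ring
  have hpq : ∑ k ∈ Finset.Icc a b, P k * Q k = 0 := by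
    rw [rj_sum_Icc_eq_range,
      Finset.sum_congr rfl (fun (m : ℕ) _ => (show P (a + (m : ℤ)) * Q (a + (m : ℤ)) =
        0 * (m : ℝ) ^ 4 + 12 * (m : ℝ) ^ 3 + (-(18 * (ℓ - 1))) * (m : ℝ) ^ 2
          + ((ℓ - 1) * (8 * ℓ - 10)) * (m : ℝ) + (-((ℓ - 1) ^ 2 * (ℓ - 2))) from by
          simp only [hPdef, hQdef]; push_cast; rw [hℓ]; ring)),
      rj_sum_quartic]
    simp only [hN]; ring
  have hp2 : ∑ k ∈ Finset.Icc a b, (P k) ^ 2 = S₁ := by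
    rw [rj_sum_Icc_eq_range,
      Finset.sum_congr rfl (fun (m : ℕ) _ => (show P (a + (m : ℤ)) ^ 2 =
        0 * (m : ℝ) ^ 4 + 0 * (m : ℝ) ^ 3 + 4 * (m : ℝ) ^ 2 + (-(4 * (ℓ - 1))) * (m : ℝ)
          + (ℓ - 1) ^ 2 from by
          simp only [hPdef]; push_cast; rw [hℓ]; ring)),
      rj_sum_quartic]
    simp only [hN, hS₁def]; ring
  have hq2 : ∑ k ∈ Finset.Icc a b, (Q k) ^ 2 = S₂ := by
    rw [rj_sum_Icc_eq_range,
      Finset.sum_congr rfl (fun (m : ℕ) _ => (show Q (a + (m : ℤ)) ^ 2 =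
        36 * (m : ℝ) ^ 4 + (-(72 * (ℓ - 1))) * (m : ℝ) ^ 3
          + (36 * (ℓ - 1) ^ 2 + 12 * (ℓ - 1) * (ℓ - 2)) * (m : ℝ) ^ 2
          + (-(12 * (ℓ - 1) ^ 2 * (ℓ - 2))) * (m : ℝ) + (ℓ - 1) ^ 2 * (ℓ - 2) ^ 2 from by
          simp only [hQdef]; push_cast; rw [hℓ]; ring)),
      rj_sum_quartic]
    simp only [hN, hS₂def]; ring
  -- swapped forms of υ₂, υ₃
  have hswap2 : υ₂ = ∑ s ∈ Finset.Icc a b, ((b : ℝ) + 1 - s) • u s := by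
    rw [h2, rj_swap2]
    refine Finset.sum_congr rfl fun s hs => ?_
    rw [Finset.mem_Icc] at hs
    rw [← Nat.cast_smul_eq_nsmul ℝ]
    congr 1
    have h0 : (0 : ℤ) ≤ b + 1 - s := by omega
    rw [← Int.cast_natCast, Int.toNat_of_nonneg h0]
    push_cast; ring
  have hswap3 : υ₃ = ∑ i ∈ Finset.Icc a b,
      (((b : ℝ) + 1 - i) * ((b : ℝ) + 2 - i) / 2) • u i := by
    rw [h3, Finset.sum_congr rfl fun k _ => rj_swap2 a k u,
      Finset.sum_comm' (s' := fun i => Finset.Icc i b) (t' := Finset.Icc a b)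
        (by intro k i; simp only [Finset.mem_Icc]; omega)]
    refine Finset.sum_congr rfl fun i hi => ?_
    rw [Finset.mem_Icc] at hi
    have step1 : ∑ k ∈ Finset.Icc i b, (k + 1 - i).toNat • u i
        = (∑ k ∈ Finset.Icc i b, ((k : ℝ) + 1 - i)) • u i := by
      rw [Finset.sum_smul]
      refine Finset.sum_congr rfl fun k hk => ?_
      rw [Finset.mem_Icc] at hk
      rw [← Nat.cast_smul_eq_nsmul ℝ]
      congr 1
      have h0 : (0 : ℤ) ≤ k + 1 - i := by omega
      rw [← Int.cast_natCast, Int.toNat_of_nonneg h0]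
      push_cast; ring
    rw [step1]
    congr 1
    have hM : (((b + 1 - i).toNat : ℕ) : ℝ) = (b : ℝ) + 1 - i := by
      have h0 : (0 : ℤ) ≤ b + 1 - i := by omega
      rw [← Int.cast_natCast, Int.toNat_of_nonneg h0]
      push_cast; ring
    rw [rj_sum_Icc_eq_range,
      Finset.sum_congr rfl (fun (m : ℕ) _ => (show ((i + (m : ℤ) : ℤ) : ℝ) + 1 - i =
        0 * (m : ℝ) ^ 4 + 0 * (m : ℝ) ^ 3 + 0 * (m : ℝ) ^ 2 + 1 * (m : ℝ) + 1 from by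
          push_cast; ring)),
      rj_sum_quartic]
    simp only [hM]; ring
  -- identification of ζ₁, ζ₂ multiples
  have hc1 : ∑ k ∈ Finset.Icc a b, P k • u k = (ℓ + 1) • ζ₁ := by
    rw [h4, smul_sub, smul_smul, h1, hswap2,
      show (ℓ + 1) * (2 / (ℓ + 1)) = 2 from by field_simp,
      Finset.smul_sum, Finset.smul_sum, ← Finset.sum_sub_distrib]
    refine Finset.sum_congr rfl fun k _ => ?_
    rw [smul_smul, ← sub_smul]
    congr 1
    simp only [hPdef]; rw [hℓ]; ring
  have hc2 : ∑ k ∈ Finset.Icc a b, Q k • u k = ((ℓ + 1) * (ℓ + 2)) • ζ₂ := by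
    rw [h5, smul_add, smul_sub, smul_smul, smul_smul, h1, hswap2, hswap3,
      show (ℓ + 1) * (ℓ + 2) * (6 / (ℓ + 1)) = 6 * (ℓ + 2) from by field_simp,
      show (ℓ + 1) * (ℓ + 2) * (12 / ((ℓ + 1) * (ℓ + 2))) = 12 from by field_simp,
      Finset.smul_sum, Finset.smul_sum, Finset.smul_sum, ← Finset.sum_sub_distrib,
      ← Finset.sum_add_distrib]
    refine Finset.sum_congr rfl fun k _ => ?_
    rw [smul_smul, smul_smul, ← sub_smul, ← add_smul]
    congr 1
    simp only [hQdef]; ring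
  -- projection inequality
  have main := rj_proj n R hR hRsym (Finset.Icc a b) u P Q ℓ S₁ S₂ hcard hp0 hq0 hpq hp2 hq2
  have sm : ∀ (c : ℝ) (x : Fin n → ℝ),
      (c • x) ⬝ᵥ R.mulVec (c • x) = c ^ 2 * (x ⬝ᵥ R.mulVec x) := fun c x => by
    rw [smul_dotProduct, Matrix.mulVec_smul, dotProduct_smul,
      smul_eq_mul, smul_eq_mul]
    ring
  rw [hc1, hc2, ← h1, sm, sm] at main
  have hZ2nn : 0 ≤ ζ₂ ⬝ᵥ R.mulVec ζ₂ := by simpa using hR.posSemidef.dotProduct_mulVec_nonneg ζ₂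
  have e1 : (1 / S₁) * ((ℓ + 1) ^ 2 * (ζ₁ ⬝ᵥ R.mulVec ζ₁))
      = (3 * (ℓ + 1) / (ℓ * (ℓ - 1))) * (ζ₁ ⬝ᵥ R.mulVec ζ₁) := by
    rw [hS₁def]; field_simp
  have e2 : (5 * (ℓ + 1) * (ℓ + 2) ^ 2 / (ℓ * (ℓ - 1) * (ℓ ^ 2 + 11))) * (ζ₂ ⬝ᵥ R.mulVec ζ₂)
      ≤ (1 / S₂) * (((ℓ + 1) * (ℓ + 2)) ^ 2 * (ζ₂ ⬝ᵥ R.mulVec ζ₂)) := by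
    rcases eq_or_lt_of_le hab' with hb2 | hb2
    · -- ℓ = 2 : both sides vanish
      have hl : ℓ = 2 := by rw [hℓ, ← hb2]; push_cast; ring
      have hS₂0 : S₂ = 0 := by rw [hS₂def, hl]; norm_num
      have hQ0 : ∀ k ∈ Finset.Icc a b, Q k = 0 := by
        intro k hk
        have := (Finset.sum_eq_zero_iff_of_nonneg
          (fun k _ => sq_nonneg (Q k))).mp (by rw [hq2, hS₂0]) k hk
        exact pow_eq_zero_iff two_ne_zero |>.mp this
      have hcz : ((ℓ + 1) * (ℓ + 2)) • ζ₂ = 0 := by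
        rw [← hc2]
        exact Finset.sum_eq_zero fun k hk => by rw [hQ0 k hk, zero_smul]
      have hζ2 : ζ₂ = 0 := by
        rcases smul_eq_zero.mp hcz with h | h
        · exfalso; rw [hl] at h; norm_num at h
        · exact h
      rw [hζ2]
      simp [dotProduct_zero]
    · -- ℓ ≥ 3
      have hab2 : a + 2 ≤ b := by omega
      have hl3 : 3 ≤ ℓ := by
        rw [hℓ]
        have : ((a : ℝ)) + 2 ≤ (b : ℝ) := by exact_mod_cast hab2
        linarith
      have hx1 : 0 < ℓ := by linarith
      have hx2 : 0 < ℓ - 1 := by linarith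
      have hx3 : 0 < ℓ ^ 2 - 4 := by nlinarith
      have hd2pos : 0 < ℓ * (ℓ - 1) * (ℓ ^ 2 - 4) := by positivity
      have hA : 0 ≤ 5 * (ℓ + 1) * (ℓ + 2) ^ 2 := by positivity
      have key2 : (1 / S₂) * (((ℓ + 1) * (ℓ + 2)) ^ 2)
          = 5 * (ℓ + 1) * (ℓ + 2) ^ 2 / (ℓ * (ℓ - 1) * (ℓ ^ 2 - 4)) := by
        rw [hS₂def]
        field_simp
      have cmp : 5 * (ℓ + 1) * (ℓ + 2) ^ 2 / (ℓ * (ℓ - 1) * (ℓ ^ 2 + 11))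
          ≤ 5 * (ℓ + 1) * (ℓ + 2) ^ 2 / (ℓ * (ℓ - 1) * (ℓ ^ 2 - 4)) := by
        apply div_le_div_of_nonneg_left hA hd2pos
        nlinarith [mul_pos hx1 hx2]
      calc 5 * (ℓ + 1) * (ℓ + 2) ^ 2 / (ℓ * (ℓ - 1) * (ℓ ^ 2 + 11)) * (ζ₂ ⬝ᵥ R.mulVec ζ₂)
          ≤ 5 * (ℓ + 1) * (ℓ + 2) ^ 2 / (ℓ * (ℓ - 1) * (ℓ ^ 2 - 4)) * (ζ₂ ⬝ᵥ R.mulVec ζ₂) :=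
            mul_le_mul_of_nonneg_right cmp hZ2nn
        _ = (1 / S₂) * (((ℓ + 1) * (ℓ + 2)) ^ 2 * (ζ₂ ⬝ᵥ R.mulVec ζ₂)) := by
            rw [← key2]; ring
  linarith [main, e1, e2]
end

section
/- (Double-sum refined Jensen inequality, Lemma 3.2) Let R ∈ ℝ^{n×n} be symmetric positive definite, a < b integers, ℓ = b - a + 1 > 1, and u : ℤ[a,b] → ℝ^n. Define υ₂ = ∑_{k=a}^{b} ∑_{s=a}^{k} u_s, υ₃ = ∑_{k=a}^{b} ∑_{s=a}^{k} ∑_{i=a}^{s} u_i, and ζ₄ = υ₂ - (3/(ℓ+2))υ₃. Then ∑_{k=a}^{b} ∑_{s=a}^{k} u_s^T R u_s - (2/(ℓ(ℓ+1))) υ₂^T R υ₂ ≥ (16(ℓ+2)/(ℓ(ℓ²-1))) ζ₄^T R ζ₄. -/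
open Finset Matrix

private lemma sum_Icc_swap {M : Type*} [AddCommMonoid M] (a b : ℤ) (f : ℤ → ℤ → M) :
    ∑ k ∈ Icc a b, ∑ s ∈ Icc a k, f k s = ∑ s ∈ Icc a b, ∑ k ∈ Icc s b, f k s :=
  Finset.sum_comm' (by intro x y; simp only [mem_Icc]; omega)

private def tc (b s : ℤ) : ℝ := (b : ℝ) - s + 1

private lemma rep_sum {M : Type*} [AddCommMonoid M] [Module ℝ M] (a b : ℤ) (f : ℤ → M) :
    ∑ k ∈ Icc a b, ∑ s ∈ Icc a k, f s = ∑ s ∈ Icc a b, tc b s • f s := by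
  rw [sum_Icc_swap a b fun _ s => f s]
  refine Finset.sum_congr rfl fun s hs => ?_
  rw [Finset.sum_const, ← Nat.cast_smul_eq_nsmul ℝ]
  congr 1
  rw [Int.card_Icc]
  have hsb : s ≤ b := (mem_Icc.mp hs).2
  have h0 : (0:ℤ) ≤ b + 1 - s := by omega
  have : (((b + 1 - s).toNat : ℤ) : ℝ) = ((b + 1 - s : ℤ) : ℝ) := by
    rw [Int.toNat_of_nonneg h0]
  rw [tc]
  push_cast at this ⊢
  linarith

private lemma reindex_sum (c d : ℤ) (f : ℤ → ℝ) :
    ∑ s ∈ Icc c d, f (d - s + 1) = ∑ r ∈ Icc 1 (d - c + 1), f r := by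
  refine Finset.sum_nbij' (fun s => d - s + 1) (fun r => d - r + 1) ?_ ?_ ?_ ?_ ?_
  · intro x hx; simp only [mem_Icc] at *; omega
  · intro x hx; simp only [mem_Icc] at *; omega
  · intro x hx; show d - (d - x + 1) + 1 = x; omega
  · intro x hx; show d - (d - x + 1) + 1 = x; omega
  · intro x hx; rfl

private lemma psum_cube : ∀ m : ℤ, 0 ≤ m →
    ((∑ r ∈ Icc (1:ℤ) m, (r:ℝ)) = (m:ℝ) * (m + 1) / 2) ∧
    ((∑ r ∈ Icc (1:ℤ) m, (r:ℝ)^2) = (m:ℝ) * (m + 1) * (2 * m + 1) / 6) ∧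
    ((∑ r ∈ Icc (1:ℤ) m, (r:ℝ)^3) = ((m:ℝ) * (m + 1) / 2) ^ 2) := by
  refine Int.le_induction ?_ ?_
  · rw [Finset.Icc_eq_empty (by omega)]
    norm_num
  · intro m hm ih
    obtain ⟨i1, i2, i3⟩ := ih
    have hins : Icc (1:ℤ) (m + 1) = insert (m + 1) (Icc 1 m) := by
      ext x; simp only [mem_Icc, mem_insert]; omega
    have hni : (m + 1) ∉ Icc (1:ℤ) m := by simp
    refine ⟨?_, ?_, ?_⟩ <;>
      rw [hins, Finset.sum_insert hni] <;>
      [rw [i1]; rw [i2]; rw [i3]] <;> push_cast <;> ring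

private lemma coeff_sum (i b : ℤ) (j : ℕ) :
    ∑ s ∈ Icc i b, ((b:ℝ) - s + 1) ^ j = ∑ r ∈ Icc (1:ℤ) (b - i + 1), (r:ℝ) ^ j := by
  rw [← reindex_sum i b (fun r => (r:ℝ) ^ j)]
  refine Finset.sum_congr rfl fun s _ => ?_
  push_cast; ring

private lemma tsum1 (i b : ℤ) (hib : i ≤ b) :
    ∑ s ∈ Icc i b, tc b s = tc b i * (tc b i + 1) / 2 := by
  have h := coeff_sum i b 1
  simp only [pow_one] at h
  simp only [tc]
  rw [h, (psum_cube (b - i + 1) (by omega)).1]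
  push_cast; ring

private lemma tsum2 (i b : ℤ) (hib : i ≤ b) :
    ∑ s ∈ Icc i b, (tc b s) ^ 2 = tc b i * (tc b i + 1) * (2 * tc b i + 1) / 6 := by
  have h := coeff_sum i b 2
  simp only [tc]
  rw [h, (psum_cube (b - i + 1) (by omega)).2.1]
  push_cast; ring

private lemma tsum3 (i b : ℤ) (hib : i ≤ b) :
    ∑ s ∈ Icc i b, (tc b s) ^ 3 = (tc b i * (tc b i + 1) / 2) ^ 2 := by
  have h := coeff_sum i b 3
  simp only [tc]
  rw [h, (psum_cube (b - i + 1) (by omega)).2.2]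
  push_cast; ring

private lemma lin_left {n : ℕ} (R : Matrix (Fin n) (Fin n) ℝ) (S : Finset ℤ)
    (c : ℤ → ℝ) (u : ℤ → Fin n → ℝ) (y : Fin n → ℝ) :
    (∑ s ∈ S, c s • u s) ⬝ᵥ R.mulVec y = ∑ s ∈ S, c s * (u s ⬝ᵥ R.mulVec y) := by
  simp only [dotProduct, Finset.sum_apply, Pi.smul_apply, smul_eq_mul, Finset.sum_mul,
    Finset.mul_sum]
  rw [Finset.sum_comm]
  exact Finset.sum_congr rfl fun s _ => Finset.sum_congr rfl fun j _ => by ring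

private lemma symmQ {n : ℕ} {R : Matrix (Fin n) (Fin n) ℝ} (hRsym : R.IsSymm)
    (x y : Fin n → ℝ) : x ⬝ᵥ R.mulVec y = y ⬝ᵥ R.mulVec x := by
  rw [Matrix.dotProduct_mulVec, ← Matrix.mulVec_transpose, hRsym.eq, dotProduct_comm]

theorem refined_jensen_double
    (n : ℕ) (R : Matrix (Fin n) (Fin n) ℝ) (hR : R.PosDef) (hRsym : R.IsSymm)
    (a b : ℤ) (hab : a < b) (u : ℤ → (Fin n → ℝ)) :
    ∀ (ℓ : ℝ), ℓ = (b : ℝ) - a + 1 →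
    ∀ (υ₂ υ₃ ζ₄ : Fin n → ℝ),
      υ₂ = ∑ k ∈ Finset.Icc a b, ∑ s ∈ Finset.Icc a k, u s →
      υ₃ = ∑ k ∈ Finset.Icc a b, ∑ s ∈ Finset.Icc a k, ∑ i ∈ Finset.Icc a s, u i →
      ζ₄ = υ₂ - (3 / (ℓ + 2)) • υ₃ →
      ∑ k ∈ Finset.Icc a b, ∑ s ∈ Finset.Icc a k, (u s) ⬝ᵥ R.mulVec (u s) -
          (2 / (ℓ * (ℓ + 1))) * (υ₂ ⬝ᵥ R.mulVec υ₂) ≥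
        (16 * (ℓ + 2) / (ℓ * (ℓ ^ 2 - 1))) * (ζ₄ ⬝ᵥ R.mulVec ζ₄) := by
  intro ℓ hℓ υ₂ υ₃ ζ₄ h2 h3 h4
  have hab' : (2:ℝ) ≤ ℓ := by
    rw [hℓ]
    have : (a:ℝ) + 1 ≤ (b:ℝ) := by exact_mod_cast hab
    linarith
  have hℓ0 : ℓ ≠ 0 := by linarith
  have hℓ1 : ℓ + 1 ≠ 0 := by linarith
  have hℓm1 : ℓ - 1 ≠ 0 := by linarith
  have hℓ2 : ℓ + 2 ≠ 0 := by linarith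
  have htca : tc b a = ℓ := by rw [tc, hℓ]
  have hQsymm := fun x y => symmQ (R := R) hRsym x y
  have hQpos : ∀ x : Fin n → ℝ, 0 ≤ x ⬝ᵥ R.mulVec x := by
    intro x; simpa using hR.posSemidef.dotProduct_mulVec_nonneg x
  -- single-sum representations
  have F1 : ∑ s ∈ Icc a b, tc b s • u s = υ₂ := by
    rw [h2]; exact (rep_sum a b u).symm
  have F2 : ∑ s ∈ Icc a b, (tc b s * (tc b s + 1) / 2) • u s = υ₃ := by
    rw [h3, rep_sum a b (fun s => ∑ i ∈ Icc a s, u i)]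
    calc ∑ s ∈ Icc a b, (tc b s * (tc b s + 1) / 2) • u s
        = ∑ i ∈ Icc a b, (∑ s ∈ Icc i b, tc b s) • u i := by
          refine Finset.sum_congr rfl fun i hi => ?_
          rw [tsum1 i b (mem_Icc.mp hi).2]
      _ = ∑ i ∈ Icc a b, ∑ s ∈ Icc i b, tc b s • u i := by
          refine Finset.sum_congr rfl fun i _ => ?_
          rw [Finset.sum_smul]
      _ = ∑ s ∈ Icc a b, ∑ i ∈ Icc a s, tc b s • u i :=
          (sum_Icc_swap a b fun s i => tc b s • u i).symm
      _ = ∑ s ∈ Icc a b, tc b s • ∑ i ∈ Icc a s, u i := by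
          refine Finset.sum_congr rfl fun s _ => ?_
          rw [Finset.smul_sum]
  have FB : ∑ s ∈ Icc a b, (tc b s * (2 * ℓ + 1 - 3 * tc b s)) • u s = (2 * (ℓ + 2)) • ζ₄ := by
    calc ∑ s ∈ Icc a b, (tc b s * (2 * ℓ + 1 - 3 * tc b s)) • u s
        = ∑ s ∈ Icc a b, ((2 * ℓ + 4) • (tc b s • u s) -
            (6:ℝ) • ((tc b s * (tc b s + 1) / 2) • u s)) := by
          refine Finset.sum_congr rfl fun s _ => ?_
          rw [smul_smul, smul_smul, ← sub_smul]
          congr 1; ring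
      _ = (2 * ℓ + 4) • υ₂ - (6:ℝ) • υ₃ := by
          rw [Finset.sum_sub_distrib, ← Finset.smul_sum, ← Finset.smul_sum, F1, F2]
      _ = (2 * (ℓ + 2)) • ζ₄ := by
          rw [h4, smul_sub, smul_smul]
          congr 2
          · ring
          · field_simp
            ring
  -- scalar coefficient sums
  have C1 : ∑ s ∈ Icc a b, tc b s = ℓ * (ℓ + 1) / 2 := by
    rw [tsum1 a b (le_of_lt hab), htca]
  have C2 : ∑ s ∈ Icc a b, (tc b s) ^ 2 = ℓ * (ℓ + 1) * (2 * ℓ + 1) / 6 := by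
    rw [tsum2 a b (le_of_lt hab), htca]
  have C3 : ∑ s ∈ Icc a b, (tc b s) ^ 3 = (ℓ * (ℓ + 1) / 2) ^ 2 := by
    rw [tsum3 a b (le_of_lt hab), htca]
  have T5 : ∑ s ∈ Icc a b, tc b s * (2 * ℓ + 1 - 3 * tc b s) = 0 := by
    have : ∀ s ∈ Icc a b, tc b s * (2 * ℓ + 1 - 3 * tc b s)
        = (2 * ℓ + 1) * tc b s - 3 * (tc b s) ^ 2 := fun s _ => by ring
    rw [Finset.sum_congr rfl this, Finset.sum_sub_distrib, ← Finset.mul_sum, ← Finset.mul_sum,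
      C1, C2]
    ring
  have T6 : ∑ s ∈ Icc a b, tc b s * (2 * ℓ + 1 - 3 * tc b s) ^ 2
      = ℓ * (ℓ + 1) * (ℓ + 2) * (ℓ - 1) / 4 := by
    have : ∀ s ∈ Icc a b, tc b s * (2 * ℓ + 1 - 3 * tc b s) ^ 2
        = (2 * ℓ + 1) ^ 2 * tc b s - (6 * (2 * ℓ + 1)) * (tc b s) ^ 2 + 9 * (tc b s) ^ 3 :=
      fun s _ => by ring
    rw [Finset.sum_congr rfl this, Finset.sum_add_distrib, Finset.sum_sub_distrib,
      ← Finset.mul_sum, ← Finset.mul_sum, ← Finset.mul_sum, C1, C2, C3]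
    ring
  have T2 : ∑ s ∈ Icc a b, tc b s * (u s ⬝ᵥ R.mulVec υ₂) = υ₂ ⬝ᵥ R.mulVec υ₂ := by
    rw [← lin_left, F1]
  have T3 : ∑ s ∈ Icc a b, (tc b s * (2 * ℓ + 1 - 3 * tc b s)) * (u s ⬝ᵥ R.mulVec ζ₄)
      = (2 * (ℓ + 2)) * (ζ₄ ⬝ᵥ R.mulVec ζ₄) := by
    rw [← lin_left, FB, smul_dotProduct, smul_eq_mul]
  -- the projection residual
  set w : ℤ → Fin n → ℝ := fun s =>
    u s - (2 / (ℓ * (ℓ + 1))) • υ₂ -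
      ((8 / (ℓ * (ℓ + 1) * (ℓ - 1))) * (2 * ℓ + 1 - 3 * tc b s)) • ζ₄ with hw
  have pos : 0 ≤ ∑ s ∈ Icc a b, tc b s * (w s ⬝ᵥ R.mulVec (w s)) := by
    refine Finset.sum_nonneg fun s hs => mul_nonneg ?_ (hQpos _)
    have : (s:ℝ) ≤ (b:ℝ) := by exact_mod_cast (mem_Icc.mp hs).2
    rw [tc]; linarith
  have expand : ∀ s ∈ Icc a b, tc b s * (w s ⬝ᵥ R.mulVec (w s))
      = tc b s * (u s ⬝ᵥ R.mulVec (u s))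
        - (2 * (2 / (ℓ * (ℓ + 1)))) * (tc b s * (u s ⬝ᵥ R.mulVec υ₂))
        - (2 * (8 / (ℓ * (ℓ + 1) * (ℓ - 1)))) *
            ((tc b s * (2 * ℓ + 1 - 3 * tc b s)) * (u s ⬝ᵥ R.mulVec ζ₄))
        + ((2 / (ℓ * (ℓ + 1))) ^ 2 * (υ₂ ⬝ᵥ R.mulVec υ₂)) * tc b s
        + (2 * (2 / (ℓ * (ℓ + 1))) * (8 / (ℓ * (ℓ + 1) * (ℓ - 1))) * (υ₂ ⬝ᵥ R.mulVec ζ₄)) *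
            (tc b s * (2 * ℓ + 1 - 3 * tc b s))
        + ((8 / (ℓ * (ℓ + 1) * (ℓ - 1))) ^ 2 * (ζ₄ ⬝ᵥ R.mulVec ζ₄)) *
            (tc b s * (2 * ℓ + 1 - 3 * tc b s) ^ 2) := by
    intro s _
    simp only [hw, sub_dotProduct, dotProduct_sub, smul_dotProduct, dotProduct_smul,
      Matrix.mulVec_sub, Matrix.mulVec_smul, smul_eq_mul]
    rw [hQsymm υ₂ (u s), hQsymm ζ₄ (u s), hQsymm ζ₄ υ₂]
    ring
  have main : ∑ s ∈ Icc a b, tc b s * (w s ⬝ᵥ R.mulVec (w s))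
      = (∑ s ∈ Icc a b, tc b s * (u s ⬝ᵥ R.mulVec (u s)))
        - (2 / (ℓ * (ℓ + 1))) * (υ₂ ⬝ᵥ R.mulVec υ₂)
        - (16 * (ℓ + 2) / (ℓ * (ℓ ^ 2 - 1))) * (ζ₄ ⬝ᵥ R.mulVec ζ₄) := by
    rw [Finset.sum_congr rfl expand]
    rw [Finset.sum_add_distrib, Finset.sum_add_distrib, Finset.sum_add_distrib,
      Finset.sum_sub_distrib, Finset.sum_sub_distrib, ← Finset.mul_sum, ← Finset.mul_sum,
      ← Finset.mul_sum, ← Finset.mul_sum, ← Finset.mul_sum]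
    rw [T2, T3, C1, T5, T6]
    have hsq : ℓ ^ 2 - 1 ≠ 0 := by nlinarith
    field_simp
    ring
  have Arep : ∑ k ∈ Icc a b, ∑ s ∈ Icc a k, (u s) ⬝ᵥ R.mulVec (u s)
      = ∑ s ∈ Icc a b, tc b s * (u s ⬝ᵥ R.mulVec (u s)) := by
    rw [rep_sum a b (fun s => (u s) ⬝ᵥ R.mulVec (u s))]
    exact Finset.sum_congr rfl fun s _ => by rw [smul_eq_mul]
  rw [Arep]
  linarith [pos, main]
end

section
/- (Refined Jensen-based single-sum inequality, Corollary) Let R ∈ ℝ^{n×n} be symmetric positive definite, a ≤ b integers, ℓ = b - a + 1, and u : ℤ[a,b] → ℝ^n. With υ₁, ζ₁, ζ₂ as in Lemma 3.1, one has ∑_{k=a}^{b} u_k^T R u_k ≥ (1/ℓ) υ₁^T R υ₁ + (1/ℓ)(3 ζ₁^T R ζ₁ + 5 ζ₂^T R ζ₂). -/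
open Finset Matrix


private lemma sum_succ {M : Type*} [AddCommMonoid M] (a b : ℤ) (h : a ≤ b + 1) (f : ℤ → M) :
    ∑ k ∈ Icc a (b+1), f k = (∑ k ∈ Icc a b, f k) + f (b+1) := by
  have h1 : Icc a (b+1) = insert (b+1) (Icc a b) := by
    ext x; simp only [Finset.mem_Icc, Finset.mem_insert]; omega
  rw [h1, Finset.sum_insert (by simp), add_comm]

private lemma mom1 (a : ℤ) : ∀ b : ℤ, a ≤ b →
    ∑ k ∈ Icc a b, ((k:ℝ)-a) = ((b:ℝ)-a)*((b:ℝ)-a+1)/2 := by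
  refine Int.le_induction ?_ ?_
  · simp
  · intro b hb ih
    rw [sum_succ a b (by omega), ih]; push_cast; ring

private lemma mom2 (a : ℤ) : ∀ b : ℤ, a ≤ b →
    ∑ k ∈ Icc a b, ((k:ℝ)-a)^2 = ((b:ℝ)-a)*((b:ℝ)-a+1)*(2*((b:ℝ)-a)+1)/6 := by
  refine Int.le_induction ?_ ?_
  · simp
  · intro b hb ih
    rw [sum_succ a b (by omega), ih]; push_cast; ring

private lemma mom3 (a : ℤ) : ∀ b : ℤ, a ≤ b →
    ∑ k ∈ Icc a b, ((k:ℝ)-a)^3 = (((b:ℝ)-a)*((b:ℝ)-a+1)/2)^2 := by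
  refine Int.le_induction ?_ ?_
  · simp
  · intro b hb ih
    rw [sum_succ a b (by omega), ih]; push_cast; ring

private lemma mom4 (a : ℤ) : ∀ b : ℤ, a ≤ b →
    ∑ k ∈ Icc a b, ((k:ℝ)-a)^4 =
      ((b:ℝ)-a)*((b:ℝ)-a+1)*(2*((b:ℝ)-a)+1)*(3*((b:ℝ)-a)^2+3*((b:ℝ)-a)-1)/30 := by
  refine Int.le_induction ?_ ?_
  · simp
  · intro b hb ih
    rw [sum_succ a b (by omega), ih]; push_cast; ring

private lemma sum_succ' {M : Type*} [AddCommMonoid M] (a b : ℤ) (h : a ≤ b + 1) (f : ℤ → M) :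
    ∑ k ∈ Icc a (b+1), f k = (∑ k ∈ Icc a b, f k) + f (b+1) := by
  have h1 : Icc a (b+1) = insert (b+1) (Icc a b) := by
    ext x; simp only [Finset.mem_Icc, Finset.mem_insert]; omega
  rw [h1, Finset.sum_insert (by simp), add_comm]

private lemma v2lem {n : ℕ} (u : ℤ → (Fin n → ℝ)) (a : ℤ) : ∀ b : ℤ, a ≤ b →
    ∑ k ∈ Icc a b, ∑ s ∈ Icc a k, u s = ∑ k ∈ Icc a b, (((b:ℝ) - k + 1)) • u k := by
  refine Int.le_induction ?_ ?_
  · simp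
  · intro b hb ih
    rw [sum_succ' a b (by omega), sum_succ' a b (by omega), ih,
        sum_succ' a b (by omega) (fun k => (((b+1:ℤ):ℝ) - k + 1) • u k)]
    have h2 : ∀ k ∈ Icc a b, (((b+1:ℤ):ℝ) - k + 1) • u k = ((b:ℝ) - k + 1) • u k + u k := by
      intro k _
      rw [show (((b+1:ℤ):ℝ) - k + 1) = ((b:ℝ) - k + 1) + 1 by push_cast; ring, add_smul, one_smul]
    rw [Finset.sum_congr rfl h2, Finset.sum_add_distrib]
    have h3 : (((b+1:ℤ):ℝ) - ((b+1:ℤ):ℝ) + 1) • u (b+1) = u (b+1) := by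
      rw [show (((b+1:ℤ):ℝ) - ((b+1:ℤ):ℝ) + 1) = 1 by ring, one_smul]
    rw [h3]
    abel

private lemma v3lem {n : ℕ} (u : ℤ → (Fin n → ℝ)) (a : ℤ) : ∀ b : ℤ, a ≤ b →
    ∑ k ∈ Icc a b, ∑ s ∈ Icc a k, ∑ i ∈ Icc a s, u i
      = ∑ k ∈ Icc a b, ((((b:ℝ) - k + 1) * ((b:ℝ) - k + 2))/2) • u k := by
  refine Int.le_induction ?_ ?_
  · simp
  · intro b hb ih
    rw [sum_succ' a b (by omega) (fun k => ∑ s ∈ Icc a k, ∑ i ∈ Icc a s, u i), ih,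
        v2lem u a (b+1) (by omega),
        sum_succ' a b (by omega) (fun k => (((b+1:ℤ):ℝ) - k + 1) • u k),
        sum_succ' a b (by omega)
          (fun k => (((((b+1:ℤ):ℝ) - k + 1) * (((b+1:ℤ):ℝ) - k + 2))/2) • u k)]
    have h2 : ∀ k ∈ Icc a b, (((((b+1:ℤ):ℝ) - k + 1) * (((b+1:ℤ):ℝ) - k + 2))/2) • u k
        = ((((b:ℝ) - k + 1) * ((b:ℝ) - k + 2))/2) • u k + (((b+1:ℤ):ℝ) - k + 1) • u k := by
      intro k _
      rw [← add_smul]; congr 1; push_cast; ring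
    rw [Finset.sum_congr rfl h2, Finset.sum_add_distrib]
    have h3 : (((((b+1:ℤ):ℝ) - ((b+1:ℤ):ℝ) + 1) * (((b+1:ℤ):ℝ) - ((b+1:ℤ):ℝ) + 2))/2) • u (b+1)
        = u (b+1) := by
      rw [show ((((b+1:ℤ):ℝ) - ((b+1:ℤ):ℝ) + 1) * (((b+1:ℤ):ℝ) - ((b+1:ℤ):ℝ) + 2))/2 = 1 by ring,
        one_smul]
    have h4 : (((b+1:ℤ):ℝ) - ((b+1:ℤ):ℝ) + 1) • u (b+1) = u (b+1) := by
      rw [show (((b+1:ℤ):ℝ) - ((b+1:ℤ):ℝ) + 1) = 1 by ring, one_smul]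
    rw [h3, h4]
    abel

private lemma B_symm' {n : ℕ} (R : Matrix (Fin n) (Fin n) ℝ) (hRsym : R.IsSymm)
    (x y : Fin n → ℝ) : x ⬝ᵥ R.mulVec y = y ⬝ᵥ R.mulVec x := by
  rw [Matrix.dotProduct_mulVec, dotProduct_comm, ← Matrix.mulVec_transpose, hRsym.eq]

private lemma B_sum_left' {n : ℕ} (R : Matrix (Fin n) (Fin n) ℝ) (s : Finset ℤ)
    (f : ℤ → Fin n → ℝ) (y : Fin n → ℝ) :
    (∑ k ∈ s, f k) ⬝ᵥ R.mulVec y = ∑ k ∈ s, f k ⬝ᵥ R.mulVec y := by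
  classical
  induction s using Finset.induction_on with
  | empty => simp
  | insert x s h ih => rw [Finset.sum_insert h, Finset.sum_insert h, add_dotProduct, ih]

private lemma B_smul_left' {n : ℕ} (R : Matrix (Fin n) (Fin n) ℝ) (c : ℝ)
    (x y : Fin n → ℝ) : (c • x) ⬝ᵥ R.mulVec y = c * (x ⬝ᵥ R.mulVec y) := by
  rw [smul_dotProduct]; rfl

private lemma B_expand' {n : ℕ} (R : Matrix (Fin n) (Fin n) ℝ) (hRsym : R.IsSymm)
    (x y z w : Fin n → ℝ) (c d e : ℝ) :
    (x - (c•y + d•z + e•w)) ⬝ᵥ R.mulVec (x - (c•y + d•z + e•w)) =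
      x ⬝ᵥ R.mulVec x - 2*c*(x ⬝ᵥ R.mulVec y) - 2*d*(x ⬝ᵥ R.mulVec z) - 2*e*(x ⬝ᵥ R.mulVec w)
      + c^2*(y ⬝ᵥ R.mulVec y) + d^2*(z ⬝ᵥ R.mulVec z) + e^2*(w ⬝ᵥ R.mulVec w)
      + 2*c*d*(y ⬝ᵥ R.mulVec z) + 2*c*e*(y ⬝ᵥ R.mulVec w) + 2*d*e*(z ⬝ᵥ R.mulVec w) := by
  simp only [Matrix.mulVec_sub, Matrix.mulVec_add, Matrix.mulVec_smul, sub_dotProduct,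
    add_dotProduct, dotProduct_sub, dotProduct_add, smul_dotProduct, dotProduct_smul,
    smul_eq_mul]
  rw [B_symm' R hRsym y x, B_symm' R hRsym z x, B_symm' R hRsym w x, B_symm' R hRsym z y,
    B_symm' R hRsym w y, B_symm' R hRsym w z]
  ring

set_option maxHeartbeats 1600000 in
theorem refined_jensen_single_corollary
    (n : ℕ) (R : Matrix (Fin n) (Fin n) ℝ) (hR : R.PosDef) (hRsym : R.IsSymm)
    (a b : ℤ) (hab : a ≤ b) (u : ℤ → (Fin n → ℝ)) :
    ∀ (ℓ : ℝ), ℓ = (b : ℝ) - a + 1 →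
    ∀ (υ₁ υ₂ υ₃ ζ₁ ζ₂ : Fin n → ℝ),
      υ₁ = ∑ k ∈ Finset.Icc a b, u k →
      υ₂ = ∑ k ∈ Finset.Icc a b, ∑ s ∈ Finset.Icc a k, u s →
      υ₃ = ∑ k ∈ Finset.Icc a b, ∑ s ∈ Finset.Icc a k, ∑ i ∈ Finset.Icc a s, u i →
      ζ₁ = υ₁ - (2 / (ℓ + 1)) • υ₂ →
      ζ₂ = υ₁ - (6 / (ℓ + 1)) • υ₂ + (12 / ((ℓ + 1) * (ℓ + 2))) • υ₃ →
      ∑ k ∈ Finset.Icc a b, (u k) ⬝ᵥ R.mulVec (u k) ≥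
        (1 / ℓ) * (υ₁ ⬝ᵥ R.mulVec υ₁) +
          (1 / ℓ) * (3 * (ζ₁ ⬝ᵥ R.mulVec ζ₁) + 5 * (ζ₂ ⬝ᵥ R.mulVec ζ₂)) := by
  intro ℓ hℓ υ₁ υ₂ υ₃ ζ₁ ζ₂ hυ₁ hυ₂ hυ₃ hζ₁ hζ₂
  have hdba : (0:ℝ) ≤ (b:ℝ) - a := by
    have : (a:ℝ) ≤ (b:ℝ) := by exact_mod_cast hab
    linarith
  have hl1 : (1:ℝ) ≤ ℓ := by rw [hℓ]; linarith
  have hl0 : ℓ ≠ 0 := by linarith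
  have hlp1 : ℓ + 1 ≠ 0 := by linarith
  have hlp2 : ℓ + 2 ≠ 0 := by linarith
  set P1 : ℤ → ℝ := fun k => 2*((k:ℝ)-a) - (ℓ-1) with hP1def
  set P2 : ℤ → ℝ := fun k => 6*((k:ℝ)-a)^2 - 6*(ℓ-1)*((k:ℝ)-a) + (ℓ-1)*(ℓ-2) with hP2def
  have hpsd : ∀ v : Fin n → ℝ, 0 ≤ v ⬝ᵥ R.mulVec v := fun v => by
    simpa using hR.posSemidef.dotProduct_mulVec_nonneg v
  -- cardinality
  have hcard : ∑ k ∈ Icc a b, (1:ℝ) = ℓ := by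
    rw [Finset.sum_const, nsmul_eq_mul, mul_one, Int.card_Icc]
    rw [hℓ]
    have h1 : ((b + 1 - a).toNat : ℤ) = b + 1 - a := Int.toNat_of_nonneg (by omega)
    have h2 : ((b + 1 - a).toNat : ℝ) = ((b:ℝ) + 1 - a) := by exact_mod_cast congrArg (Int.cast : ℤ → ℝ) h1
    rw [h2]; ring
  -- scalar sum identities
  have hsP1 : ∑ k ∈ Icc a b, P1 k = 0 := by
    have h : ∀ k ∈ Icc a b, P1 k = 2*((k:ℝ)-a) + (-(ℓ-1))*1 := by
      intro k _; rw [hP1def]; ring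
    rw [Finset.sum_congr rfl h]
    simp only [Finset.sum_add_distrib, ← Finset.mul_sum]
    rw [mom1 a b hab, hcard, hℓ]; ring
  have hsP2 : ∑ k ∈ Icc a b, P2 k = 0 := by
    have h : ∀ k ∈ Icc a b, P2 k = 6*((k:ℝ)-a)^2 + (-(6*(ℓ-1)))*((k:ℝ)-a) + ((ℓ-1)*(ℓ-2))*1 := by
      intro k _; rw [hP2def]; ring
    rw [Finset.sum_congr rfl h]
    simp only [Finset.sum_add_distrib, ← Finset.mul_sum]
    rw [mom1 a b hab, mom2 a b hab, hcard, hℓ]; ring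
  have hsP11 : ∑ k ∈ Icc a b, (P1 k)^2 = ℓ*(ℓ^2-1)/3 := by
    have h : ∀ k ∈ Icc a b, (P1 k)^2 = 4*((k:ℝ)-a)^2 + (-(4*(ℓ-1)))*((k:ℝ)-a) + ((ℓ-1)^2)*1 := by
      intro k _; rw [hP1def]; ring
    rw [Finset.sum_congr rfl h]
    simp only [Finset.sum_add_distrib, ← Finset.mul_sum]
    rw [mom1 a b hab, mom2 a b hab, hcard, hℓ]; ring
  have hsP22 : ∑ k ∈ Icc a b, (P2 k)^2 = ℓ*(ℓ^2-1)*(ℓ^2-4)/5 := by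
    have h : ∀ k ∈ Icc a b, (P2 k)^2 = 36*((k:ℝ)-a)^4 + (-(72*(ℓ-1)))*((k:ℝ)-a)^3
        + (36*(ℓ-1)^2+12*(ℓ-1)*(ℓ-2))*((k:ℝ)-a)^2 + (-(12*(ℓ-1)^2*(ℓ-2)))*((k:ℝ)-a)
        + ((ℓ-1)^2*(ℓ-2)^2)*1 := by
      intro k _; rw [hP2def]; ring
    rw [Finset.sum_congr rfl h]
    simp only [Finset.sum_add_distrib, ← Finset.mul_sum]
    rw [mom1 a b hab, mom2 a b hab, mom3 a b hab, mom4 a b hab, hcard, hℓ]; ring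
  have hsP12 : ∑ k ∈ Icc a b, P1 k * P2 k = 0 := by
    have h : ∀ k ∈ Icc a b, P1 k * P2 k = 12*((k:ℝ)-a)^3 + (-(18*(ℓ-1)))*((k:ℝ)-a)^2
        + (2*(ℓ-1)*(ℓ-2)+6*(ℓ-1)^2)*((k:ℝ)-a) + (-((ℓ-1)^2*(ℓ-2)))*1 := by
      intro k _; rw [hP1def, hP2def]; ring
    rw [Finset.sum_congr rfl h]
    simp only [Finset.sum_add_distrib, ← Finset.mul_sum]
    rw [mom1 a b hab, mom2 a b hab, mom3 a b hab, hcard, hℓ]; ring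
  -- vector identities
  have hw1 : ∑ k ∈ Icc a b, P1 k • u k = (ℓ+1) • ζ₁ := by
    rw [hζ₁, hυ₁, hυ₂, v2lem u a b hab, smul_sub]
    simp only [Finset.smul_sum, smul_smul]
    rw [← Finset.sum_sub_distrib]
    apply Finset.sum_congr rfl
    intro k hk
    rw [← sub_smul]
    congr 1
    simp only [hP1def]
    rw [hℓ]
    field_simp
    ring
  have hw2 : ∑ k ∈ Icc a b, P2 k • u k = ((ℓ+1)*(ℓ+2)) • ζ₂ := by
    rw [hζ₂, hυ₁, hυ₂, hυ₃, v2lem u a b hab, v3lem u a b hab, smul_add, smul_sub]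
    simp only [Finset.smul_sum, smul_smul]
    rw [← Finset.sum_sub_distrib, ← Finset.sum_add_distrib]
    apply Finset.sum_congr rfl
    intro k hk
    rw [← sub_smul, ← add_smul]
    congr 1
    simp only [hP2def]
    rw [hℓ]
    field_simp
    ring
  -- component sums for the quadratic form
  have hsU : ∑ k ∈ Icc a b, (u k ⬝ᵥ R.mulVec υ₁) = υ₁ ⬝ᵥ R.mulVec υ₁ := by
    rw [← B_sum_left', ← hυ₁]
  have hsZ1 : ∑ k ∈ Icc a b, P1 k * (u k ⬝ᵥ R.mulVec ζ₁) = (ℓ+1) * (ζ₁ ⬝ᵥ R.mulVec ζ₁) := by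
    have h : ∀ k ∈ Icc a b, P1 k * (u k ⬝ᵥ R.mulVec ζ₁) = (P1 k • u k) ⬝ᵥ R.mulVec ζ₁ :=
      fun k _ => (B_smul_left' R _ _ _).symm
    rw [Finset.sum_congr rfl h, ← B_sum_left', hw1, B_smul_left']
  have hsZ2 : ∑ k ∈ Icc a b, P2 k * (u k ⬝ᵥ R.mulVec ζ₂)
      = ((ℓ+1)*(ℓ+2)) * (ζ₂ ⬝ᵥ R.mulVec ζ₂) := by
    have h : ∀ k ∈ Icc a b, P2 k * (u k ⬝ᵥ R.mulVec ζ₂) = (P2 k • u k) ⬝ᵥ R.mulVec ζ₂ :=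
      fun k _ => (B_smul_left' R _ _ _).symm
    rw [Finset.sum_congr rfl h, ← B_sum_left', hw2, B_smul_left']
  -- master inequality
  have master : ∀ α β : ℝ,
      (1/ℓ) * (υ₁ ⬝ᵥ R.mulVec υ₁)
      + (2*α*(ℓ+1) - α^2*(ℓ*(ℓ^2-1)/3)) * (ζ₁ ⬝ᵥ R.mulVec ζ₁)
      + (2*β*((ℓ+1)*(ℓ+2)) - β^2*(ℓ*(ℓ^2-1)*(ℓ^2-4)/5)) * (ζ₂ ⬝ᵥ R.mulVec ζ₂)
      ≤ ∑ k ∈ Icc a b, (u k) ⬝ᵥ R.mulVec (u k) := by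
    intro α β
    have key : (0:ℝ) ≤ ∑ k ∈ Icc a b,
        ((u k - ((1/ℓ)•υ₁ + (α*P1 k)•ζ₁ + (β*P2 k)•ζ₂)) ⬝ᵥ
          R.mulVec (u k - ((1/ℓ)•υ₁ + (α*P1 k)•ζ₁ + (β*P2 k)•ζ₂))) :=
      Finset.sum_nonneg fun k _ => hpsd _
    have expand : ∀ k ∈ Icc a b,
        ((u k - ((1/ℓ)•υ₁ + (α*P1 k)•ζ₁ + (β*P2 k)•ζ₂)) ⬝ᵥ
          R.mulVec (u k - ((1/ℓ)•υ₁ + (α*P1 k)•ζ₁ + (β*P2 k)•ζ₂)))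
        = (u k) ⬝ᵥ R.mulVec (u k)
          - (2*(1/ℓ)) * (u k ⬝ᵥ R.mulVec υ₁)
          - (2*α) * (P1 k * (u k ⬝ᵥ R.mulVec ζ₁))
          - (2*β) * (P2 k * (u k ⬝ᵥ R.mulVec ζ₂))
          + ((1/ℓ)^2*(υ₁ ⬝ᵥ R.mulVec υ₁)) * 1
          + (α^2*(ζ₁ ⬝ᵥ R.mulVec ζ₁)) * (P1 k)^2
          + (β^2*(ζ₂ ⬝ᵥ R.mulVec ζ₂)) * (P2 k)^2
          + (2*(1/ℓ)*α*(υ₁ ⬝ᵥ R.mulVec ζ₁)) * (P1 k)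
          + (2*(1/ℓ)*β*(υ₁ ⬝ᵥ R.mulVec ζ₂)) * (P2 k)
          + (2*α*β*(ζ₁ ⬝ᵥ R.mulVec ζ₂)) * (P1 k * P2 k) := by
      intro k _
      rw [B_expand' R hRsym (u k) υ₁ ζ₁ ζ₂ (1/ℓ) (α*P1 k) (β*P2 k)]
      ring
    rw [Finset.sum_congr rfl expand] at key
    simp only [Finset.sum_add_distrib, Finset.sum_sub_distrib, ← Finset.mul_sum] at key
    rw [hsU, hsZ1, hsZ2, hsP1, hsP2, hsP11, hsP22, hsP12, hcard] at key
    have hfix : (1/ℓ)^2*(υ₁ ⬝ᵥ R.mulVec υ₁)*ℓ = (1/ℓ)*(υ₁ ⬝ᵥ R.mulVec υ₁) := by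
      field_simp
    linarith [key, hfix]
  -- case analysis
  rcases eq_or_lt_of_le hab with hba | hlt
  · -- b = a, ℓ = 1
    have hba' : b = a := hba.symm
    have hl : ℓ = 1 := by rw [hℓ, hba']; ring
    have hz1 : ζ₁ = 0 := by
      have h1 : ∑ k ∈ Icc a b, P1 k • u k = 0 := by
        rw [hba', Finset.Icc_self, Finset.sum_singleton]
        have hp : P1 a = 0 := by simp only [hP1def]; rw [hl]; norm_num
        rw [hp, zero_smul]
      rw [hw1] at h1
      rcases smul_eq_zero.mp h1 with h | h
      · exact absurd h hlp1
      · exact h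
    have hz2 : ζ₂ = 0 := by
      have h1 : ∑ k ∈ Icc a b, P2 k • u k = 0 := by
        rw [hba', Finset.Icc_self, Finset.sum_singleton]
        have hp : P2 a = 0 := by simp only [hP2def]; rw [hl]; norm_num
        rw [hp, zero_smul]
      rw [hw2] at h1
      rcases smul_eq_zero.mp h1 with h | h
      · exact absurd h (by intro hc; exact hlp1 (by rw [mul_eq_zero] at hc; rcases hc with h'|h'; exact h'; linarith))
      · exact h
    have m00 := master 0 0
    rw [hz1, hz2] at m00 ⊢
    simp only [zero_dotProduct, dotProduct_zero, mul_zero, zero_mul,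
      add_zero, mul_zero] at m00 ⊢
    linarith
  · rcases eq_or_lt_of_le (by omega : a + 1 ≤ b) with hba2 | hlt2
    · -- b = a + 1, ℓ = 2
      have hba2' : b = a + 1 := hba2.symm
      have hl : ℓ = 2 := by rw [hℓ, hba2']; push_cast; ring
      have hz2 : ζ₂ = 0 := by
        have h1 : ∑ k ∈ Icc a b, P2 k • u k = 0 := by
          rw [hba2', sum_succ' a a (by omega), Finset.Icc_self, Finset.sum_singleton]
          have e1 : P2 a = 0 := by simp only [hP2def]; rw [hl]; norm_num
          have e2 : P2 (a+1) = 0 := by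
            simp only [hP2def]; rw [hl]; push_cast; ring
          rw [e1, e2, zero_smul, zero_smul, add_zero]
        rw [hw2] at h1
        rcases smul_eq_zero.mp h1 with h | h
        · exact absurd h (by intro hc; exact hlp1 (by rw [mul_eq_zero] at hc; rcases hc with h'|h'; exact h'; linarith))
        · exact h
      have hX := hpsd ζ₁
      have m := master (3/2) 0
      rw [hz2] at m ⊢
      simp only [zero_dotProduct, dotProduct_zero, mul_zero, zero_mul,
        add_zero] at m ⊢
      rw [hl] at m ⊢
      norm_num at m ⊢
      linarith
    · -- a + 2 ≤ b, ℓ ≥ 3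
      have hl3 : (3:ℝ) ≤ ℓ := by
        rw [hℓ]
        have : (a:ℝ) + 2 ≤ (b:ℝ) := by exact_mod_cast (by omega : a + 2 ≤ b)
        linarith
      have d0 : ℓ ≠ 0 := hl0
      have d1 : ℓ - 1 ≠ 0 := by intro h; nlinarith
      have d2 : ℓ - 2 ≠ 0 := by intro h; nlinarith
      have e1 : 2*(3/(ℓ*(ℓ-1)))*(ℓ+1) - (3/(ℓ*(ℓ-1)))^2*(ℓ*(ℓ^2-1)/3)
          = 3/ℓ + 6/(ℓ*(ℓ-1)) := by
        field_simp
        ring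
      have e2 : 2*(5/(ℓ*(ℓ-1)*(ℓ-2)))*((ℓ+1)*(ℓ+2))
          - (5/(ℓ*(ℓ-1)*(ℓ-2)))^2*(ℓ*(ℓ^2-1)*(ℓ^2-4)/5)
          = 5/ℓ + 30/((ℓ-1)*(ℓ-2)) := by
        field_simp
        ring
      have m := master (3/(ℓ*(ℓ-1))) (5/(ℓ*(ℓ-1)*(ℓ-2)))
      rw [e1, e2] at m
      have hX := hpsd ζ₁
      have hY := hpsd ζ₂
      have k1 : 0 ≤ (6/(ℓ*(ℓ-1))) * (ζ₁ ⬝ᵥ R.mulVec ζ₁) :=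
        mul_nonneg (div_nonneg (by norm_num) (by nlinarith)) hX
      have k2 : 0 ≤ (30/((ℓ-1)*(ℓ-2))) * (ζ₂ ⬝ᵥ R.mulVec ζ₂) :=
        mul_nonneg (div_nonneg (by norm_num) (by nlinarith)) hY
      have r1 : (3/ℓ + 6/(ℓ*(ℓ-1)))*(ζ₁ ⬝ᵥ R.mulVec ζ₁)
          = (1/ℓ)*(3*(ζ₁ ⬝ᵥ R.mulVec ζ₁)) + (6/(ℓ*(ℓ-1)))*(ζ₁ ⬝ᵥ R.mulVec ζ₁) := by ring
      have r2 : (5/ℓ + 30/((ℓ-1)*(ℓ-2)))*(ζ₂ ⬝ᵥ R.mulVec ζ₂)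
          = (1/ℓ)*(5*(ζ₂ ⬝ᵥ R.mulVec ζ₂)) + (30/((ℓ-1)*(ℓ-2)))*(ζ₂ ⬝ᵥ R.mulVec ζ₂) := by ring
      have r3 : (1/ℓ)*(3*(ζ₁ ⬝ᵥ R.mulVec ζ₁) + 5*(ζ₂ ⬝ᵥ R.mulVec ζ₂))
          = (1/ℓ)*(3*(ζ₁ ⬝ᵥ R.mulVec ζ₁)) + (1/ℓ)*(5*(ζ₂ ⬝ᵥ R.mulVec ζ₂)) := by ring
      linarith [m, k1, k2, r1, r2, r3]
end

section
/- (Scalar refined Jensen inequality) Let a < b be integers, ℓ = b - a + 1 ≥ 2, and u : ℤ[a,b] → ℝ. With υ₁ = ∑_{k=a}^{b} u_k and υ₂ = ∑_{k=a}^{b} ∑_{s=a}^{k} u_s and ζ₁ = υ₁ - (2/(ℓ+1))υ₂, one has ∑_{k=a}^{b} u_k² ≥ (1/ℓ) υ₁² + (3(ℓ+1)/(ℓ(ℓ-1))) ζ₁². -/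
open Finset

lemma Icc_top_int (a b : ℤ) (h : a ≤ b + 1) (f : ℤ → ℝ) :
    ∑ k ∈ Icc a (b+1), f k = (∑ k ∈ Icc a b, f k) + f (b+1) := by
  have hs : Icc a (b+1) = insert (b+1) (Icc a b) := by
    ext x; simp; omega
  rw [hs, Finset.sum_insert (by simp), add_comm]

lemma shift_sum (f : ℤ → ℝ) (a : ℤ) : ∀ n : ℕ,
    ∑ k ∈ Icc a (a + n - 1), f k = ∑ j ∈ range n, f (a + j) := by
  intro n
  induction n with
  | zero => simp
  | succ m ih =>
      have h1 : a + (m + 1 : ℕ) - 1 = (a + m - 1) + 1 := by push_cast; ring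
      rw [h1, Icc_top_int a (a + m - 1) (by omega), ih, sum_range_succ]
      have : a + (m:ℤ) - 1 + 1 = a + m := by ring
      rw [this]

lemma double_sum (g : ℕ → ℝ) : ∀ n : ℕ,
    ∑ j ∈ range n, ∑ i ∈ range (j+1), g i
      = ∑ i ∈ range n, ((n:ℝ) - i) * g i := by
  intro n
  induction n with
  | zero => simp
  | succ m ih =>
      rw [sum_range_succ, ih]
      have : ∑ i ∈ range (m+1), (((m:ℝ)+1) - i) * g i
          = ∑ i ∈ range (m+1), (((m:ℝ) - i) * g i + g i) := by
        apply sum_congr rfl; intro i _; ring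
      push_cast
      rw [this, sum_add_distrib, sum_range_succ (fun i => ((m:ℝ) - i) * g i)]
      simp

lemma expand_sum (g : ℕ → ℝ) (c d : ℝ) : ∀ n : ℕ,
    ∑ j ∈ range n, (g j - c - d * j)^2
      = (∑ j ∈ range n, (g j)^2) - 2*c*(∑ j ∈ range n, g j)
        - 2*d*(∑ j ∈ range n, (j:ℝ) * g j)
        + c^2 * n + 2*c*d*(∑ j ∈ range n, (j:ℝ))
        + d^2 * (∑ j ∈ range n, (j:ℝ)^2) := by
  intro n
  induction n with
  | zero => simp
  | succ m ih =>
      rw [sum_range_succ, ih, sum_range_succ, sum_range_succ, sum_range_succ,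
        sum_range_succ, sum_range_succ]
      push_cast
      ring

lemma sumj (n : ℕ) : ∑ j ∈ range n, (j:ℝ) = n*(n-1)/2 := by
  induction n with
  | zero => simp
  | succ m ih => rw [sum_range_succ, ih]; push_cast; ring

lemma sumj2 (n : ℕ) : ∑ j ∈ range n, (j:ℝ)^2 = n*(n-1)*(2*n-1)/6 := by
  induction n with
  | zero => simp
  | succ m ih => rw [sum_range_succ, ih]; push_cast; ring

theorem refined_jensen_scalar
    (a b : ℤ) (hab : a < b) (u : ℤ → ℝ) :
    ∀ (ℓ : ℝ), ℓ = (b : ℝ) - a + 1 →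
    ∀ (υ₁ υ₂ ζ₁ : ℝ),
      υ₁ = ∑ k ∈ Finset.Icc a b, u k →
      υ₂ = ∑ k ∈ Finset.Icc a b, ∑ s ∈ Finset.Icc a k, u s →
      ζ₁ = υ₁ - (2 / (ℓ + 1)) * υ₂ →
      ∑ k ∈ Finset.Icc a b, (u k) ^ 2 ≥ (1 / ℓ) * υ₁ ^ 2 +
        (3 * (ℓ + 1) / (ℓ * (ℓ - 1))) * ζ₁ ^ 2 := by
  intro ℓ hℓ υ₁ υ₂ ζ₁ h1 h2 h3
  set n : ℕ := (b + 1 - a).toNat with hn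
  have hncast : (n : ℤ) = b + 1 - a := by omega
  have hn2 : 2 ≤ n := by omega
  have hb : b = a + (n : ℤ) - 1 := by omega
  set g : ℕ → ℝ := fun j => u (a + j) with hg
  set U : ℝ := ∑ j ∈ range n, g j with hU
  set V : ℝ := ∑ j ∈ range n, (j:ℝ) * g j with hV
  set Q : ℝ := ∑ j ∈ range n, (g j)^2 with hQ
  have hQ' : ∑ k ∈ Finset.Icc a b, (u k) ^ 2 = Q := by
    rw [hb]; exact shift_sum (fun k => (u k)^2) a n
  have hU' : υ₁ = U := by rw [h1, hb]; exact shift_sum u a n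
  have hV' : υ₂ = (n:ℝ) * U - V := by
    rw [h2, hb, shift_sum (fun k => ∑ s ∈ Finset.Icc a k, u s) a n]
    have hinner : ∀ j : ℕ, ∑ s ∈ Finset.Icc a (a + (j:ℤ)), u s
        = ∑ i ∈ range (j+1), g i := by
      intro j
      have : a + (j:ℤ) = a + ((j+1 : ℕ) : ℤ) - 1 := by push_cast; ring
      rw [this]; exact shift_sum u a (j+1)
    calc ∑ j ∈ range n, ∑ s ∈ Finset.Icc a (a + (j:ℤ)), u s
        = ∑ j ∈ range n, ∑ i ∈ range (j+1), g i := by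
          exact sum_congr rfl fun j _ => hinner j
      _ = ∑ i ∈ range n, ((n:ℝ) - i) * g i := double_sum g n
      _ = ∑ i ∈ range n, ((n:ℝ) * g i - (i:ℝ) * g i) := by
          exact sum_congr rfl fun i _ => by ring
      _ = (n:ℝ) * U - V := by
          rw [sum_sub_distrib, ← mul_sum]
  set N : ℝ := (n : ℝ) with hN
  have hℓN : ℓ = N := by
    rw [hℓ, hb]; push_cast; ring
  have hN2 : (2:ℝ) ≤ N := by rw [hN]; exact_mod_cast hn2
  have hN0 : N ≠ 0 := by linarith
  have hNm : N - 1 ≠ 0 := by intro h; nlinarith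
  have hNp : N + 1 ≠ 0 := by linarith
  set d : ℝ := 6*(2*V - (N-1)*U)/(N*(N-1)*(N+1)) with hd
  set c : ℝ := U/N - d*(N-1)/2 with hc
  have key : 0 ≤ Q - 2*c*U - 2*d*V + c^2 * N + 2*c*d*(N*(N-1)/2)
      + d^2 * (N*(N-1)*(2*N-1)/6) := by
    have h := expand_sum g c d n
    rw [sumj, sumj2] at h
    have h0 : 0 ≤ ∑ j ∈ range n, (g j - c - d * j)^2 :=
      sum_nonneg fun j _ => sq_nonneg _
    rw [h] at h0
    linarith [h0]
  have hζ : ζ₁ = U - (2/(N+1)) * (N*U - V) := by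
    rw [h3, hU', hV', hℓN]
  have heq : (1 / N) * U ^ 2 + (3 * (N + 1) / (N * (N - 1))) * ζ₁ ^ 2
      = 2*c*U + 2*d*V - c^2 * N - 2*c*d*(N*(N-1)/2)
        - d^2 * (N*(N-1)*(2*N-1)/6) := by
    rw [hζ, hc, hd]
    field_simp
    ring
  rw [hQ', hℓN, hU', heq]
  linarith [key]
end
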